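/- Let d be a positive integer with d ≡ 2 (mod 4). Let F₁ = {x^i : i odd, i < d} and F₂ = {(x+1)^i : i even, (d+2)/2 ≤ i ≤ d} ∪ {(x-1)^i : i even, (d+2)/2 ≤ i ≤ d}, and F = F₁ ∪ F₂, a family of d+1 polynomials in ℝ[x]. Then the dimension of the linear span of F equals (3d+2)/4. -/

import Mathlib

open Polynomial Finset

lemma linIndep_of_natDegree_injOn (s : Finset (Polynomial ℝ))
    (h0 : ∀ p ∈ s, p ≠ 0)
    (hd : Set.InjOn Polynomial.natDegree (s : Set (Polynomial ℝ))) :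
    LinearIndependent ℝ (fun p : (s : Set (Polynomial ℝ)) => (p : Polynomial ℝ)) := by
  induction s using Finset.strongInduction with
  | _ s ih =>
    rcases s.eq_empty_or_nonempty with rfl | hne
    · simpa using linearIndependent_empty_type
    · obtain ⟨p, hp, hmax⟩ := s.exists_max_image Polynomial.natDegree hne
      have hrec := ih (s.erase p) (Finset.erase_ssubset hp)
        (fun q hq => h0 q (Finset.mem_of_mem_erase hq))
        (hd.mono (by simpa using Finset.erase_subset p s))
      have hset : (s : Set (Polynomial ℝ)) = insert p ((s.erase p : Finset _) : Set _) := by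
        rw [Finset.coe_erase, Set.insert_diff_singleton]
        exact (Set.insert_eq_self.mpr hp).symm
      rw [hset]
      refine LinearIndepOn.id_insert (K := ℝ) hrec ?_
      intro hmem
      have hle : Submodule.span ℝ (((s.erase p : Finset _) : Set (Polynomial ℝ)))
          ≤ Polynomial.degreeLT ℝ p.natDegree := by
        rw [Submodule.span_le]
        intro q hq
        simp only [Finset.coe_erase, Set.mem_diff, Set.mem_singleton_iff, Finset.mem_coe] at hq
        have hlt : q.natDegree < p.natDegree :=
          lt_of_le_of_ne (hmax q hq.1) (fun h => hq.2 (hd hq.1 hp h))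
        rw [SetLike.mem_coe, Polynomial.mem_degreeLT]
        calc q.degree ≤ (q.natDegree : WithBot ℕ) := Polynomial.degree_le_natDegree
          _ < (p.natDegree : WithBot ℕ) := by exact_mod_cast hlt
      have h2 := hle hmem
      rw [Polynomial.mem_degreeLT, Polynomial.degree_eq_natDegree (h0 p hp)] at h2
      exact lt_irrefl _ (by exact_mod_cast h2)

theorem stmt18 (d : ℕ) (hd : 0 < d) (hmod : d % 4 = 2) :
    Module.finrank ℝ
      (Submodule.span ℝ
        ({p : Polynomial ℝ | ∃ i, Odd i ∧ i < d ∧ p = X ^ i} ∪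
         {p : Polynomial ℝ | ∃ i, Even i ∧ (d + 2) / 2 ≤ i ∧ i ≤ d ∧
            p = (X + C 1) ^ i} ∪
         {p : Polynomial ℝ | ∃ i, Even i ∧ (d + 2) / 2 ≤ i ∧ i ≤ d ∧
            p = (X - C 1) ^ i})) = (3 * d + 2) / 4 := by
  obtain ⟨k, rfl⟩ : ∃ k, d = 4 * k + 2 := ⟨d / 4, by omega⟩
  set v : ℕ → Polynomial ℝ := fun j => if j % 2 = 1 then X ^ j else (X + C 1) ^ j with hv
  set S : Finset ℕ :=
    ((Finset.range (4 * k + 2)).filter (fun j => j % 2 = 1)) ∪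
    ((Finset.Icc (2 * k + 2) (4 * k + 2)).filter (fun j => j % 2 = 0)) with hS
  set T : Finset (Polynomial ℝ) := S.image v with hT
  have hdeg : ∀ j, (v j).natDegree = j := by
    intro j
    rw [hv]
    dsimp only
    split_ifs
    · exact natDegree_X_pow j
    · rw [natDegree_pow, natDegree_X_add_C, mul_one]
  have hne : ∀ j, v j ≠ 0 := by
    intro j
    rw [hv]
    dsimp only
    split_ifs
    · exact pow_ne_zero j X_ne_zero
    · exact ((monic_X_add_C (1:ℝ)).pow j).ne_zero
  have hvinj : Function.Injective v := fun a b h => by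
    rw [← hdeg a, ← hdeg b, h]
  -- membership of X^j in span T for odd j < 4k+2
  have hXmem : ∀ j, j % 2 = 1 → j < 4 * k + 2 →
      (X : Polynomial ℝ) ^ j ∈ Submodule.span ℝ (T : Set (Polynomial ℝ)) := by
    intro j h1 h2
    apply Submodule.subset_span
    rw [hT]
    simp only [coe_image, Set.mem_image, mem_coe]
    refine ⟨j, ?_, by rw [hv]; simp [h1]⟩
    rw [hS]
    simp [Finset.mem_union, Finset.mem_filter, Finset.mem_range, h1, h2]
  have hPmem : ∀ i, i % 2 = 0 → 2 * k + 2 ≤ i → i ≤ 4 * k + 2 →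
      ((X : Polynomial ℝ) + C 1) ^ i ∈ Submodule.span ℝ (T : Set (Polynomial ℝ)) := by
    intro i h1 h2 h3
    apply Submodule.subset_span
    rw [hT]
    simp only [coe_image, Set.mem_image, mem_coe]
    refine ⟨i, ?_, by rw [hv]; simp [h1]⟩
    rw [hS]
    simp [Finset.mem_union, Finset.mem_filter, Finset.mem_Icc, h1, h2, h3]
  -- key: (X - C 1)^i in span T
  have hMmem : ∀ i, i % 2 = 0 → 2 * k + 2 ≤ i → i ≤ 4 * k + 2 →
      ((X : Polynomial ℝ) - C 1) ^ i ∈ Submodule.span ℝ (T : Set (Polynomial ℝ)) := by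
    intro i h1 h2 h3
    have hA : ((X : Polynomial ℝ) + C 1) ^ i
        = ∑ j ∈ Finset.range (i + 1), X ^ j * (C 1) ^ (i - j) * (i.choose j : Polynomial ℝ) :=
      add_pow X (C 1) i
    have hB : ((X : Polynomial ℝ) - C 1) ^ i
        = ∑ j ∈ Finset.range (i + 1), X ^ j * (-C 1) ^ (i - j) * (i.choose j : Polynomial ℝ) := by
      rw [sub_eq_add_neg]; exact add_pow X (-C 1) i
    have hdiff : ((X : Polynomial ℝ) + C 1) ^ i - (X - C 1) ^ i
        = ∑ j ∈ Finset.range (i + 1),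
            ((1 - (-1 : ℝ) ^ (i - j)) * (i.choose j)) • (X : Polynomial ℝ) ^ j := by
      rw [hA, hB, ← Finset.sum_sub_distrib]
      refine Finset.sum_congr rfl fun j hj => ?_
      rw [Polynomial.smul_eq_C_mul]
      simp only [map_mul, map_sub, map_pow, map_one, map_neg, C_1, C_neg,
        Polynomial.C_eq_natCast]
      push_cast
      ring
    have heq : ((X : Polynomial ℝ) - C 1) ^ i
        = (X + C 1) ^ i - ∑ j ∈ Finset.range (i + 1),
            ((1 - (-1 : ℝ) ^ (i - j)) * (i.choose j)) • (X : Polynomial ℝ) ^ j := by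
      rw [← hdiff]; ring
    rw [heq]
    apply Submodule.sub_mem _ (hPmem i h1 h2 h3)
    apply Submodule.sum_mem
    intro j hj
    rw [Finset.mem_range] at hj
    by_cases hjo : j % 2 = 1
    · exact Submodule.smul_mem _ _ (hXmem j hjo (by omega))
    · have hev : Even (i - j) := by
        exact Nat.even_iff.mpr (by omega)
      rw [hev.neg_one_pow]
      norm_num
  -- span equality
  have hspan : Submodule.span ℝ
        ({p : Polynomial ℝ | ∃ i, Odd i ∧ i < 4 * k + 2 ∧ p = X ^ i} ∪
         {p : Polynomial ℝ | ∃ i, Even i ∧ (4 * k + 2 + 2) / 2 ≤ i ∧ i ≤ 4 * k + 2 ∧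
            p = (X + C 1) ^ i} ∪
         {p : Polynomial ℝ | ∃ i, Even i ∧ (4 * k + 2 + 2) / 2 ≤ i ∧ i ≤ 4 * k + 2 ∧
            p = (X - C 1) ^ i}) = Submodule.span ℝ (T : Set (Polynomial ℝ)) := by
    apply le_antisymm
    · rw [Submodule.span_le]
      rintro p ((⟨i, hio, hilt, rfl⟩ | ⟨i, hie, hi1, hi2, rfl⟩) | ⟨i, hie, hi1, hi2, rfl⟩)
      · exact hXmem i (Nat.odd_iff.mp hio) hilt
      · exact hPmem i (Nat.even_iff.mp hie) (by omega) hi2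
      · exact hMmem i (Nat.even_iff.mp hie) (by omega) hi2
    · rw [Submodule.span_le]
      intro p hp
      rw [hT] at hp
      simp only [coe_image, Set.mem_image, mem_coe] at hp
      obtain ⟨j, hjS, rfl⟩ := hp
      rw [hS] at hjS
      simp only [Finset.mem_union, Finset.mem_filter, Finset.mem_range, Finset.mem_Icc] at hjS
      apply Submodule.subset_span
      rcases hjS with ⟨hjlt, hjo⟩ | ⟨⟨hj1, hj2⟩, hje⟩
      · left; left
        exact ⟨j, Nat.odd_iff.mpr hjo, hjlt, by rw [hv]; simp [hjo]⟩
      · left; right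
        exact ⟨j, Nat.even_iff.mpr hje, by omega, hj2, by rw [hv]; simp [hje]⟩
  rw [hspan]
  have hlin : LinearIndependent ℝ (fun p : (T : Set (Polynomial ℝ)) => (p : Polynomial ℝ)) := by
    apply linIndep_of_natDegree_injOn
    · intro p hp
      rw [hT] at hp
      simp only [Finset.mem_image] at hp
      obtain ⟨j, _, rfl⟩ := hp
      exact hne j
    · intro p hp q hq hpq
      simp only [hT, coe_image, Set.mem_image, mem_coe] at hp hq
      obtain ⟨a, _, rfl⟩ := hp
      obtain ⟨b, _, rfl⟩ := hq
      rw [hdeg, hdeg] at hpq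
      rw [hpq]
  rw [finrank_span_finset_eq_card hlin]
  rw [hT, Finset.card_image_of_injective _ hvinj, hS]
  rw [Finset.card_union_of_disjoint (by
    rw [Finset.disjoint_left]
    intro a ha hb
    simp only [Finset.mem_filter] at ha hb
    omega)]
  have c1 : ((Finset.range (4 * k + 2)).filter (fun j => j % 2 = 1)).card = 2 * k + 1 := by
    have : (Finset.range (4 * k + 2)).filter (fun j => j % 2 = 1)
        = (Finset.range (2 * k + 1)).image (fun j => 2 * j + 1) := by
      ext a
      simp only [Finset.mem_filter, Finset.mem_range, Finset.mem_image]
      constructor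
      · rintro ⟨h1, h2⟩; exact ⟨a / 2, by omega, by omega⟩
      · rintro ⟨b, hb, rfl⟩; omega
    rw [this, Finset.card_image_of_injective _ (fun a b h => by omega), Finset.card_range]
  have c2 : ((Finset.Icc (2 * k + 2) (4 * k + 2)).filter (fun j => j % 2 = 0)).card = k + 1 := by
    have : (Finset.Icc (2 * k + 2) (4 * k + 2)).filter (fun j => j % 2 = 0)
        = (Finset.range (k + 1)).image (fun j => 2 * k + 2 + 2 * j) := by
      ext a
      simp only [Finset.mem_filter, Finset.mem_Icc, Finset.mem_range, Finset.mem_image]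
      constructor
      · rintro ⟨⟨h1, h2⟩, h3⟩; exact ⟨(a - (2 * k + 2)) / 2, by omega, by omega⟩
      · rintro ⟨b, hb, rfl⟩; omega
    rw [this, Finset.card_image_of_injective _ (fun a b h => by omega), Finset.card_range]
  rw [c1, c2]
  omega
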